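/- Let R = ∂B be a nondegenerate convex reflector, u ∈ Sⁿ, and X ∈ R a point with ⟨X,u⟩ = h(u), where h is the support function of R; set x = X/‖X‖. If P(y₁,q₁) and P(y₂,q₂) are paraboloids supporting to R at X whose tangent hyperplanes at X both equal α(u) = {Z : ⟨Z,u⟩ = h(u)} (equivalently, u = (x − yᵢ)/‖x − yᵢ‖ for i = 1,2), then y₁ = y₂ and q₁ = q₂. -/
import Mathlib


open scoped InnerProductSpace ENNReal
open Metric Set

noncomputable section

/-- Euclidean space `ℝ^{n+1}`. -/
abbrev E (n : ℕ) : Type := EuclideanSpace ℝ (Fin (n + 1))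

/-- The unit sphere `Sⁿ` centered at the origin in `ℝ^{n+1}`. -/
def sph (n : ℕ) : Set (E n) := Metric.sphere (0 : E n) 1

/-- `B` is the convex body of a nondegenerate convex reflector: `B` is the intersection of the
solid confocal paraboloids `{X : ‖X‖ - ⟪X,y⟫ ≤ p̃ y}` for some `p̃ : Sⁿ → (0,∞]`
(encoded via `ENNReal`), `B` is compact and the origin is an interior point of `B`.
The reflector itself is `R = frontier B`. -/
def IsReflectorBody (n : ℕ) (B : Set (E n)) : Prop :=
  IsCompact B ∧ (0 : E n) ∈ interior B ∧
    ∃ pt : E n → ℝ≥0∞, (∀ y ∈ sph n, 0 < pt y) ∧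
      B = {X : E n | ∀ y ∈ sph n, ENNReal.ofReal (‖X‖ - ⟪X, y⟫_ℝ) ≤ pt y}

/-- The focal function `p(y) = sup_{X ∈ B} (‖X‖ - ⟪X, y⟫)` of the reflector `∂B`. -/
def focal (n : ℕ) (B : Set (E n)) (y : E n) : ℝ :=
  sSup ((fun X => ‖X‖ - ⟪X, y⟫_ℝ) '' B)

/-- The radial function `ρ(x) = sup {λ ≥ 0 : λ x ∈ B}`. -/
def radial (n : ℕ) (B : Set (E n)) (x : E n) : ℝ :=
  sSup {l : ℝ | 0 ≤ l ∧ l • x ∈ B}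

/-- The support function `h(U) = sup_{X ∈ B} ⟪X, U⟫`. -/
def suppFn (n : ℕ) (B : Set (E n)) (U : E n) : ℝ :=
  sSup ((fun X => ⟪X, U⟫_ℝ) '' B)

/-- The extended focal function `P(Y) = sup_{X ∈ B} (‖X‖‖Y‖ - ⟪X, Y⟫)` on all of `ℝ^{n+1}`. -/
def extFocal (n : ℕ) (B : Set (E n)) (Y : E n) : ℝ :=
  sSup ((fun X => ‖X‖ * ‖Y‖ - ⟪X, Y⟫_ℝ) '' B)

/-- The directrix `D(R) = {X - ‖X‖y : X ∈ R, y ∈ Sⁿ, ‖X‖ - ⟪X,y⟫ = p(y)}` of the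
reflector `R = frontier B`. -/
def directrix (n : ℕ) (B : Set (E n)) : Set (E n) :=
  {Z : E n | ∃ X ∈ frontier B, ∃ y ∈ sph n,
    ‖X‖ - ⟪X, y⟫_ℝ = focal n B y ∧ Z = X - ‖X‖ • y}


/-- If `x`, `y`, `u` are unit vectors and `u = (x - y)/‖x - y‖`, then
`y = x - (2⟪x,u⟫) • u`. -/
lemma aux_unit_dir (n : ℕ) (x y u : E n) (hx : ‖x‖ = 1) (hy : ‖y‖ = 1) (hu : ‖u‖ = 1)
    (h : u = ‖x - y‖⁻¹ • (x - y)) : y = x - (2 * ⟪x, u⟫_ℝ) • u := by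
  have ht0 : ‖x - y‖ ≠ 0 := by
    intro h0
    rw [h0, inv_zero, zero_smul] at h
    rw [h, norm_zero] at hu
    norm_num at hu
  set t : ℝ := ‖x - y‖ with htdef
  have hxy : x - y = t • u := by
    rw [h, smul_smul, mul_inv_cancel₀ ht0, one_smul]
  have hy2 : y = x - t • u := by rw [← hxy]; abel
  have hnorm : ‖x - t • u‖ ^ 2 = 1 := by
    rw [← hy2, hy]; norm_num
  have hexp : ‖x - t • u‖ ^ 2 = ‖x‖ ^ 2 - 2 * (t * ⟪x, u⟫_ℝ) + (t * ‖u‖) ^ 2 := by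
    rw [norm_sub_sq_real, real_inner_smul_right, norm_smul]
    have : |t| = t := abs_of_nonneg (norm_nonneg _)
    rw [Real.norm_eq_abs, this]
  have ht : t = 2 * ⟪x, u⟫_ℝ := by
    have := hnorm
    rw [hexp, hx, hu] at this
    have h' : t * (t - 2 * ⟪x, u⟫_ℝ) = 0 := by nlinarith
    rcases mul_eq_zero.mp h' with h1 | h1
    · exact absurd h1 ht0
    · linarith
  rw [hy2, ht]

/-- If two paraboloids `P(y₁,q₁)`, `P(y₂,q₂)` both support `R` at a contact
point `X` of the supporting hyperplane `α(u)` and both have `α(u)` as their tangent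
hyperplane at `X` (equivalently `u = (x - yᵢ)/‖x - yᵢ‖`), then they coincide. -/
theorem statement5 (n : ℕ) (hn : 1 ≤ n) (B R : Set (E n))
    (hB : IsReflectorBody n B) (hR : R = frontier B)
    (u : E n) (hu : u ∈ sph n)
    (X : E n) (hXR : X ∈ R) (hXu : ⟪X, u⟫_ℝ = suppFn n B u)
    (x : E n) (hx : x = ‖X‖⁻¹ • X)
    (y₁ y₂ : E n) (hy₁ : y₁ ∈ sph n) (hy₂ : y₂ ∈ sph n)
    (q₁ q₂ : ℝ) (hq₁ : 0 < q₁) (hq₂ : 0 < q₂)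
    (hsupp₁ : (∀ Z ∈ R, ‖Z‖ - ⟪Z, y₁⟫_ℝ ≤ q₁) ∧ ‖X‖ - ⟪X, y₁⟫_ℝ = q₁)
    (hsupp₂ : (∀ Z ∈ R, ‖Z‖ - ⟪Z, y₂⟫_ℝ ≤ q₂) ∧ ‖X‖ - ⟪X, y₂⟫_ℝ = q₂)
    (hu₁ : u = ‖x - y₁‖⁻¹ • (x - y₁))
    (hu₂ : u = ‖x - y₂‖⁻¹ • (x - y₂)) :
    y₁ = y₂ ∧ q₁ = q₂ := by
  have hX0 : X ≠ 0 := by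
    intro h0
    have hfr : X ∈ frontier B := hR ▸ hXR
    have : X ∉ interior B := hfr.2
    exact this (h0 ▸ hB.2.1)
  have hnx : ‖x‖ = 1 := by
    rw [hx, norm_smul, norm_inv, norm_norm, inv_mul_cancel₀ (norm_ne_zero_iff.mpr hX0)]
  have hny₁ : ‖y₁‖ = 1 := by simpa [sph, mem_sphere_zero_iff_norm] using hy₁
  have hny₂ : ‖y₂‖ = 1 := by simpa [sph, mem_sphere_zero_iff_norm] using hy₂
  have hnu : ‖u‖ = 1 := by simpa [sph, mem_sphere_zero_iff_norm] using hu
  have h1 := aux_unit_dir n x y₁ u hnx hny₁ hnu hu₁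
  have h2 := aux_unit_dir n x y₂ u hnx hny₂ hnu hu₂
  have hy12 : y₁ = y₂ := by rw [h1, h2]
  refine ⟨hy12, ?_⟩
  rw [← hsupp₁.2, ← hsupp₂.2, hy12]
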